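/- Let σ ∈ ℝ be fixed. Let (r_j) be a sequence of reals tending to +∞, let (ω_j) be positive reals with ω_j · log(r_j) → 0, and let (r'_j), (r''_j) be sequences of reals satisfying |r'_j − r_j| < ω_j and |r''_j − r_j| < ω_j for all j. Then Γ(σ + i r'_j) / Γ(σ + i r''_j) → 1 as j → ∞. -/

import Mathlib

open Complex Filter Topology Finset

lemma Hsum_le (n : ℕ) :
    ∑ k ∈ range n, (1/((k:ℝ)+1)) ≤ 1 + Real.log n := by
  have h := harmonic_le_one_add_log n
  have : ((harmonic n : ℚ) : ℝ) = ∑ k ∈ range n, (1/((k:ℝ)+1)) := by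
    rw [harmonic]; push_cast; simp [one_div]
  rw [← this]; exact_mod_cast h

lemma le_Hsum (n : ℕ) : Real.log (n+1) ≤ ∑ k ∈ range n, (1/((k:ℝ)+1)) := by
  have h := log_add_one_le_harmonic n
  have : ((harmonic n : ℚ) : ℝ) = ∑ k ∈ range n, (1/((k:ℝ)+1)) := by
    rw [harmonic]; push_cast; simp [one_div]
  rw [← this]; exact_mod_cast h

lemma harm_diff (N m : ℕ) :
    ∑ k ∈ range N, (1/((k:ℝ)+1) - 1/((k:ℝ)+1+m)) ≤ ∑ k ∈ range m, (1/((k:ℝ)+1)) := by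
  rw [Finset.sum_sub_distrib]
  have h2 : ∑ k ∈ range N, (1/((k:ℝ)+1+m)) = ∑ k ∈ Ico m (m+N), (1/((k:ℝ)+1)) := by
    rw [Finset.sum_Ico_eq_sum_range]
    simp only [Nat.add_sub_cancel_left]
    apply Finset.sum_congr rfl
    intro k _; push_cast; ring_nf
  rw [h2]
  have hnn : ∀ k ∈ Ico m (m+N), (0:ℝ) ≤ 1/((k:ℝ)+1) := by
    intro k _; positivity
  rcases le_or_gt m N with h | h
  · have e1 : ∑ k ∈ range N, (1/((k:ℝ)+1))
        = ∑ k ∈ range m, (1/((k:ℝ)+1)) + ∑ k ∈ Ico m N, (1/((k:ℝ)+1)) := by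
      rw [Finset.range_eq_Ico, ← Finset.sum_Ico_consecutive _ (Nat.zero_le m) h,
        ← Finset.range_eq_Ico]
    have e2 : ∑ k ∈ Ico m N, (1/((k:ℝ)+1)) ≤ ∑ k ∈ Ico m (m+N), (1/((k:ℝ)+1)) := by
      apply Finset.sum_le_sum_of_subset_of_nonneg
      · apply Finset.Ico_subset_Ico le_rfl; omega
      · intro k _ _; positivity
    linarith
  · have e1 : ∑ k ∈ range N, (1/((k:ℝ)+1)) ≤ ∑ k ∈ range m, (1/((k:ℝ)+1)) := by
      apply Finset.sum_le_sum_of_subset_of_nonneg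
      · exact Finset.range_subset_range.mpr h.le
      · intro k _ _; positivity
    have e2 : (0:ℝ) ≤ ∑ k ∈ Ico m (m+N), (1/((k:ℝ)+1)) := Finset.sum_nonneg hnn
    linarith

lemma abs_lb (σ τ : ℝ) (hτ : 2*|σ|+2 ≤ τ) (k : ℕ) :
    (τ + k + 1)/4 ≤ ‖(σ:ℂ) + (τ:ℂ)*I + (k:ℂ)‖ := by
  set z : ℂ := (σ:ℂ) + (τ:ℂ)*I + (k:ℂ) with hz
  have hre : z.re = σ + k := by simp [hz]
  have him : z.im = τ := by simp [hz]
  have h1 : τ ≤ ‖z‖ := by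
    rw [← him]; exact (le_abs_self _).trans (Complex.abs_im_le_norm z)
  have h2 : σ + (k:ℝ) ≤ ‖z‖ := by
    rw [← hre]; exact Complex.re_le_norm z
  have hσ : -|σ| ≤ σ := neg_abs_le σ
  rcases le_or_gt ((k:ℝ)+1) (3*τ) with h | h
  · linarith
  · have hk : (1:ℝ) ≤ k := by
      have : (0:ℝ) ≤ |σ| := abs_nonneg σ
      by_contra hc
      push_neg at hc
      have : (k:ℝ) = 0 := by
        have := Nat.lt_one_iff.mp (by exact_mod_cast hc)
        simp [this]
      rw [this] at h; linarith
    linarith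

lemma sum_inv_bound (σ τ : ℝ) (hτ : 2*|σ|+2 ≤ τ) (n : ℕ) (hn : 1 ≤ n) :
    ‖((Real.log n : ℝ) : ℂ) - ∑ k ∈ range (n+1), ((σ:ℂ)+(τ:ℂ)*I+(k:ℂ))⁻¹‖
      ≤ 10 + 8*Real.log (τ+1) := by
  have hσ0 : (0:ℝ) ≤ |σ| := abs_nonneg σ
  have hτ2 : (2:ℝ) ≤ τ := by linarith
  set m := ⌈τ⌉₊ with hm
  have hmτ : (τ:ℝ) ≤ m := Nat.le_ceil τ
  have hmτ1 : (m:ℝ) ≤ τ + 1 := (Nat.ceil_lt_add_one (by linarith)).le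
  have hm1 : 0 < m := Nat.one_le_ceil_iff.mpr (by linarith)
  set H : ℝ := ∑ k ∈ range (n+1), (1/((k:ℝ)+1)) with hH
  have hHc : ((H:ℝ):ℂ) = ∑ k ∈ range (n+1), ((k:ℂ)+1)⁻¹ := by
    rw [hH]; push_cast
    apply Finset.sum_congr rfl; intros; ring_nf
  have hdec : ((Real.log n : ℝ) : ℂ) - ∑ k ∈ range (n+1), ((σ:ℂ)+(τ:ℂ)*I+(k:ℂ))⁻¹
      = ((Real.log n - H : ℝ) : ℂ)
        + ∑ k ∈ range (n+1), (((k:ℂ)+1)⁻¹ - ((σ:ℂ)+(τ:ℂ)*I+(k:ℂ))⁻¹) := by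
    rw [Finset.sum_sub_distrib, ofReal_sub, hHc]; ring
  rw [hdec]
  refine (norm_add_le _ _).trans ?_
  have h1 : ‖((Real.log n - H : ℝ) : ℂ)‖ ≤ 2 := by
    rw [Complex.norm_real, Real.norm_eq_abs, abs_le]
    constructor
    · have h2 := Hsum_le (n+1)
      have h3 : Real.log (n+1) ≤ Real.log n + Real.log 2 := by
        rw [← Real.log_mul (by positivity) (by norm_num)]
        apply Real.log_le_log (by positivity)
        have : (1:ℝ) ≤ n := by exact_mod_cast hn
        push_cast; linarith
      have h4 : Real.log 2 ≤ 1 := by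
        have := Real.log_le_sub_one_of_pos (x := 2) (by norm_num); linarith
      push_cast at h2 ⊢
      linarith
    · have h2 := le_Hsum (n+1)
      have h3 : Real.log n ≤ Real.log ((n:ℝ)+1+1) := by
        apply Real.log_le_log (by exact_mod_cast hn)
        push_cast; linarith
      push_cast at h2 ⊢
      linarith
  have h2 : ‖∑ k ∈ range (n+1), (((k:ℂ)+1)⁻¹ - ((σ:ℂ)+(τ:ℂ)*I+(k:ℂ))⁻¹)‖
      ≤ 8 + 8*Real.log (τ+1) := by
    refine (norm_sum_le _ _).trans ?_
    have hterm : ∀ k ∈ range (n+1),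
        ‖(((k:ℂ)+1)⁻¹ - ((σ:ℂ)+(τ:ℂ)*I+(k:ℂ))⁻¹)‖
          ≤ 8*(1/((k:ℝ)+1) - 1/((k:ℝ)+1+m)) := by
      intro k _
      set z : ℂ := (σ:ℂ)+(τ:ℂ)*I+(k:ℂ) with hz
      set K : ℝ := (k:ℝ)+1 with hK
      have hK1 : (1:ℝ) ≤ K := by rw [hK]; have : (0:ℝ) ≤ k := Nat.cast_nonneg k; linarith
      have hK0 : (0:ℝ) < K := by linarith
      have hzlb : (τ + K)/4 ≤ ‖z‖ := by
        have := abs_lb σ τ hτ k; rw [hK]; convert this using 2; ring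
      have hz0 : z ≠ 0 := by
        intro h0; rw [h0] at hzlb; simp at hzlb; linarith
      have hk0 : ((k:ℂ)+1) ≠ 0 := by
        have := Nat.cast_add_one_ne_zero (R := ℂ) k
        push_cast at this; exact this
      have hid : ((k:ℂ)+1)⁻¹ - z⁻¹ = (z - ((k:ℂ)+1))/(((k:ℂ)+1) * z) :=
        inv_sub_inv hk0 hz0
      rw [hid]
      have hnum : ‖z - ((k:ℂ)+1)‖ ≤ 2*τ := by
        have h5 : z - ((k:ℂ)+1) = ((σ - 1 : ℝ):ℂ) + (τ:ℝ)*I := by rw [hz]; push_cast; ring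
        rw [h5]
        refine (Complex.norm_le_abs_re_add_abs_im _).trans ?_
        simp only [Complex.add_re, Complex.add_im, Complex.ofReal_re, Complex.ofReal_im,
          Complex.mul_re, Complex.mul_im, Complex.I_re, Complex.I_im]
        have : |σ - 1| ≤ |σ| + 1 := by
          calc |σ - 1| ≤ |σ| + |(-1 : ℝ)| := by rw [sub_eq_add_neg]; exact abs_add_le σ (-1)
          _ = |σ| + 1 := by norm_num
        have h6 : |τ| = τ := abs_of_pos (by linarith)
        simp only [mul_zero, mul_one, zero_mul, sub_zero, add_zero, zero_add]
        rw [h6] at *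
        linarith
      have habs : ‖((k:ℂ)+1) * z‖ = K * ‖z‖ := by
        rw [norm_mul]
        congr 1
        rw [hK]
        have : ((k:ℂ)+1) = (((k:ℝ)+1 : ℝ):ℂ) := by push_cast; ring
        rw [this, Complex.norm_real, Real.norm_eq_abs, abs_of_pos (by exact hK0)]
      rw [norm_div, habs]
      have hden : K * ((τ+K)/4) ≤ K * ‖z‖ :=
        mul_le_mul_of_nonneg_left hzlb (by linarith)
      have hdpos : (0:ℝ) < K * ((τ+K)/4) := by
        apply mul_pos hK0; linarith
      have step1 : ‖z - ((k:ℂ)+1)‖ / (K * ‖z‖)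
          ≤ (2*τ) / (K * ((τ+K)/4)) :=
        div_le_div₀ (by linarith) hnum hdpos hden
      refine step1.trans ?_
      have e1 : (2*τ) / (K * ((τ+K)/4)) = 8*(1/K - 1/(K+τ)) := by
        field_simp
        ring
      rw [e1]
      have e2 : 1/(K+m) ≤ 1/(K+τ) := by
        apply one_div_le_one_div_of_le (by linarith)
        linarith
      have : (k:ℝ)+1+m = K + m := by rw [hK]
      rw [this]
      linarith
    refine (Finset.sum_le_sum hterm).trans ?_
    rw [← Finset.mul_sum]
    have h7 := harm_diff (n+1) m
    have h8 := Hsum_le m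
    have h9 : Real.log m ≤ Real.log (τ+1) := by
      apply Real.log_le_log (by exact_mod_cast hm1)
      exact hmτ1
    nlinarith [h7, h8, h9]
  linarith

lemma sq_sum_bound (σ τ : ℝ) (hτ : 2*|σ|+2 ≤ τ) (n : ℕ) :
    ∑ k ∈ range (n+1), (1/‖(σ:ℂ)+(τ:ℂ)*I+(k:ℂ)‖)^2 ≤ 24 := by
  have hσ0 : (0:ℝ) ≤ |σ| := abs_nonneg σ
  have hτ2 : (2:ℝ) ≤ τ := by linarith
  set m := ⌈τ⌉₊ with hm
  have hmτ : (τ:ℝ) ≤ m := Nat.le_ceil τ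
  have hmτ1 : (m:ℝ) ≤ τ + 1 := (Nat.ceil_lt_add_one (by linarith)).le
  have hm1 : 0 < m := Nat.one_le_ceil_iff.mpr (by linarith)
  have hterm : ∀ k ∈ range (n+1),
      (1/‖(σ:ℂ)+(τ:ℂ)*I+(k:ℂ)‖)^2
        ≤ (16/τ) * (1/((k:ℝ)+1) - 1/((k:ℝ)+1+m)) := by
    intro k _
    set K : ℝ := (k:ℝ)+1 with hK
    have hK1 : (1:ℝ) ≤ K := by rw [hK]; have : (0:ℝ) ≤ k := Nat.cast_nonneg k; linarith
    have hK0 : (0:ℝ) < K := by linarith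
    have hzlb : (τ + K)/4 ≤ ‖(σ:ℂ)+(τ:ℂ)*I+(k:ℂ)‖ := by
      have := abs_lb σ τ hτ k; convert this using 2; rw [hK]; ring
    have hzpos : (0:ℝ) < ‖(σ:ℂ)+(τ:ℂ)*I+(k:ℂ)‖ := by linarith [hzlb]
    have h1 : (1/‖(σ:ℂ)+(τ:ℂ)*I+(k:ℂ)‖)^2 ≤ (4/(τ+K))^2 := by
      apply pow_le_pow_left₀ (by positivity)
      rw [div_le_div_iff₀ hzpos (by linarith)]
      linarith [hzlb]
    refine h1.trans ?_
    have e1 : (4/(τ+K))^2 = 16/(τ+K)^2 := by rw [div_pow]; norm_num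
    have e2 : (16/τ) * (1/K - 1/(K+τ)) = 16/(K*(K+τ)) := by
      field_simp
      ring
    have e3 : 16/(τ+K)^2 ≤ 16/(K*(K+τ)) := by
      apply div_le_div_of_nonneg_left (by norm_num) (by nlinarith)
      nlinarith
    have e4 : 1/(K+m) ≤ 1/(K+τ) := by
      apply one_div_le_one_div_of_le (by linarith); linarith
    have e5 : (16/τ) * (1/K - 1/(K+m)) ≥ 16/(K*(K+τ)) := by
      rw [← e2]
      have : (0:ℝ) < 16/τ := by positivity
      nlinarith [e4]
    rw [e1, show (k:ℝ)+1+(m:ℝ) = K + m from by rw [hK]]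
    linarith
  refine (Finset.sum_le_sum hterm).trans ?_
  rw [← Finset.mul_sum]
  have h7 := harm_diff (n+1) m
  have h8 := Hsum_le m
  have h9 : Real.log m ≤ τ := by
    calc Real.log m ≤ Real.log (τ+1) := Real.log_le_log (by exact_mod_cast hm1) hmτ1
    _ ≤ τ := by linarith [Real.log_le_sub_one_of_pos (x := τ+1) (by linarith)]
  have h10 : ∑ k ∈ range (n+1), (1/((k:ℝ)+1) - 1/((k:ℝ)+1+m)) ≤ 1 + τ := by
    linarith
  have hpos : (0:ℝ) < 16/τ := by positivity
  calc (16/τ) * ∑ k ∈ range (n+1), (1/((k:ℝ)+1) - 1/((k:ℝ)+1+m))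
      ≤ (16/τ) * (1+τ) := by
        apply mul_le_mul_of_nonneg_left h10 (le_of_lt hpos)
    _ = 16/τ + 16 := by field_simp
    _ ≤ 24 := by
        have : 16/τ ≤ 8 := by rw [div_le_iff₀ (by linarith)]; linarith
        linarith

lemma gamma_ratio_bound (σ τ τ' : ℝ) (hτ : 2*|σ|+2 ≤ τ) (hτ' : 0 < τ')
    (hδ : |τ - τ'| ≤ 1)
    (hB : |τ - τ'| *(10+8*Real.log (τ+1)) + 24*(τ-τ')^2 ≤ 1) :
    ‖Complex.Gamma ((σ:ℂ) + (τ:ℂ)*I) / Complex.Gamma ((σ:ℂ) + (τ':ℂ)*I) - 1‖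
      ≤ 2*(|τ - τ'| *(10+8*Real.log (τ+1)) + 24*(τ-τ')^2) := by
  have hσ0 : (0:ℝ) ≤ |σ| := abs_nonneg σ
  have hτ2 : (2:ℝ) ≤ τ := by linarith
  set δ : ℝ := τ - τ' with hδdef
  set B : ℝ := |δ| *(10+8*Real.log (τ+1)) + 24*δ^2 with hBdef
  have hB0 : 0 ≤ B := by
    rw [hBdef]
    have : (0:ℝ) ≤ Real.log (τ+1) := Real.log_nonneg (by linarith)
    positivity
  set s1 : ℂ := (σ:ℂ) + (τ:ℂ)*I with hs1
  set s2 : ℂ := (σ:ℂ) + (τ':ℂ)*I with hs2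
  have hs12 : s1 = s2 + (δ:ℂ)*I := by rw [hs1, hs2, hδdef]; push_cast; ring
  have hs1k : ∀ k : ℕ, s1 + k ≠ 0 := by
    intro k h0
    have := congrArg Complex.im h0
    simp [hs1] at this
    linarith
  have hs2k : ∀ k : ℕ, s2 + k ≠ 0 := by
    intro k h0
    have := congrArg Complex.im h0
    simp [hs2] at this
    linarith
  have hG2 : Complex.Gamma s2 ≠ 0 := by
    apply Complex.Gamma_ne_zero
    intro m h0
    have := congrArg Complex.im h0
    simp [hs2] at this
    linarith
  have htend : Tendsto (fun n => Complex.GammaSeq s1 n / Complex.GammaSeq s2 n) atTop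
      (𝓝 (Complex.Gamma s1 / Complex.Gamma s2)) :=
    (Complex.GammaSeq_tendsto_Gamma s1).div (Complex.GammaSeq_tendsto_Gamma s2) hG2
  have hnorm : Tendsto (fun n => ‖Complex.GammaSeq s1 n / Complex.GammaSeq s2 n - 1‖) atTop
      (𝓝 ‖Complex.Gamma s1 / Complex.Gamma s2 - 1‖) := (htend.sub_const 1).norm
  refine le_of_tendsto hnorm (eventually_atTop.2 ⟨1, fun n hn => ?_⟩)
  -- per-n bound
  set L : ℝ := Real.log n with hL
  set u : ℕ → ℂ := fun k => -((δ:ℂ)*I) * (s1+k)⁻¹ with hu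
  set E : ℂ := ((δ:ℂ)*I) * (L:ℂ) + ∑ k ∈ range (n+1), Complex.log ((s2+k)/(s1+k)) with hE
  have hn0 : ((n:ℂ)) ≠ 0 := Nat.cast_ne_zero.mpr (by omega)
  have hP1 : (∏ k ∈ range (n+1), (s1+k)) ≠ 0 := Finset.prod_ne_zero_iff.mpr fun k _ => hs1k k
  have hP2 : (∏ k ∈ range (n+1), (s2+k)) ≠ 0 := Finset.prod_ne_zero_iff.mpr fun k _ => hs2k k
  have hfact : ((n.factorial : ℂ)) ≠ 0 := Nat.cast_ne_zero.mpr (Nat.factorial_ne_zero n)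
  have hlogn : Complex.log (n:ℂ) = ((L:ℝ):ℂ) := by
    rw [hL, ← Complex.ofReal_natCast, Complex.ofReal_log (Nat.cast_nonneg n)]
  -- the identity GammaSeq s1 n = exp E * GammaSeq s2 n
  have hdivne : ∀ k : ℕ, (s2+k)/(s1+k) ≠ 0 := fun k => div_ne_zero (hs2k k) (hs1k k)
  have hexpE : Complex.exp E = Complex.exp ((δ:ℂ)*I*(L:ℂ))
      * ((∏ k ∈ range (n+1), (s2+k)) / (∏ k ∈ range (n+1), (s1+k))) := by
    rw [hE, Complex.exp_add, Complex.exp_sum]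
    congr 1
    rw [← Finset.prod_div_distrib]
    exact Finset.prod_congr rfl fun k _ => Complex.exp_log (hdivne k)
  have hkey : Complex.GammaSeq s1 n = Complex.exp E * Complex.GammaSeq s2 n := by
    rw [Complex.GammaSeq, Complex.GammaSeq, hexpE,
      Complex.cpow_def_of_ne_zero hn0, Complex.cpow_def_of_ne_zero hn0, hlogn]
    have hexp12 : Complex.exp ((L:ℂ) * s1)
        = Complex.exp ((δ:ℂ)*I*(L:ℂ)) * Complex.exp ((L:ℂ) * s2) := by
      rw [← Complex.exp_add]; congr 1; rw [hs12]; ring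
    rw [hexp12]
    field_simp
  have hG2n : Complex.GammaSeq s2 n ≠ 0 := by
    rw [Complex.GammaSeq, Complex.cpow_def_of_ne_zero hn0]
    exact div_ne_zero (mul_ne_zero (Complex.exp_ne_zero _) hfact) hP2
  have hratio : Complex.GammaSeq s1 n / Complex.GammaSeq s2 n = Complex.exp E := by
    rw [hkey, mul_div_assoc, div_self hG2n, mul_one]
  -- bound ‖E‖ ≤ B
  have habs1 : ∀ k : ℕ, τ ≤ ‖s1 + k‖ := by
    intro k
    have him : (s1 + k).im = τ := by simp [hs1]
    calc τ = |(s1+k).im| := by rw [him, abs_of_pos (by linarith)]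
    _ ≤ ‖s1+k‖ := Complex.abs_im_le_norm _
  have huabs : ∀ k : ℕ, ‖u k‖ = |δ| * (‖s1+k‖)⁻¹ := by
    intro k
    rw [hu]
    simp only [norm_mul, norm_neg, norm_inv, Complex.norm_real, Real.norm_eq_abs, Complex.norm_I, mul_one]
  have hulb : ∀ k : ℕ, ‖u k‖ ≤ 1/2 := by
    intro k
    rw [huabs k]
    have h2 : (‖s1+k‖)⁻¹ ≤ 1/2 := by
      rw [inv_le_comm₀ (by linarith [habs1 k]) (by norm_num)]
      calc (1/2 : ℝ)⁻¹ = 2 := by norm_num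
      _ ≤ τ := hτ2
      _ ≤ ‖s1+k‖ := habs1 k
    calc |δ| * (‖s1+k‖)⁻¹ ≤ 1 * (1/2) := by
          apply mul_le_mul hδ h2 (by positivity) (by norm_num)
    _ = 1/2 := by norm_num
  -- rewrite E
  have hlogu : ∀ k ∈ range (n+1), (s2+(k:ℂ))/(s1+(k:ℂ)) = 1 + u k := by
    intro k _
    have hmul : (1 + u k) * (s1+(k:ℂ)) = s2 + (k:ℂ) := by
      have h9 : u k * (s1+(k:ℂ)) = -((δ:ℂ)*I) := by
        have hk := congrFun hu k
        rw [hk, mul_assoc, inv_mul_cancel₀ (hs1k k), mul_one]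
      rw [add_mul, one_mul, h9, hs12]
      ring
    rw [← hmul, mul_div_assoc, div_self (hs1k k), mul_one]
  have hEeq : E = ((δ:ℂ)*I) * ((L:ℂ) - ∑ k ∈ range (n+1), (s1+(k:ℂ))⁻¹)
      + ∑ k ∈ range (n+1), (Complex.log (1 + u k) - u k) := by
    rw [hE, Finset.sum_congr rfl fun k hk => by rw [hlogu k hk]]
    rw [Finset.sum_sub_distrib]
    have hsumu : ∑ k ∈ range (n+1), u k
        = -((δ:ℂ)*I) * ∑ k ∈ range (n+1), (s1+(k:ℂ))⁻¹ := by
      rw [hu, Finset.mul_sum]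
    rw [hsumu]; ring
  have hEbound : ‖E‖ ≤ B := by
    rw [hEeq]
    refine (norm_add_le _ _).trans ?_
    have p1 : ‖((δ:ℂ)*I) * ((L:ℂ) - ∑ k ∈ range (n+1), (s1+(k:ℂ))⁻¹)‖
        ≤ |δ| * (10+8*Real.log (τ+1)) := by
      rw [norm_mul]
      have h1 : ‖((δ:ℂ)*I)‖ = |δ| := by
        rw [norm_mul, Complex.norm_real, Real.norm_eq_abs, Complex.norm_I, mul_one]
      rw [h1]
      apply mul_le_mul_of_nonneg_left _ (abs_nonneg δ)
      have := sum_inv_bound σ τ hτ n hn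
      rw [hs1]
      exact this
    have p2 : ‖∑ k ∈ range (n+1), (Complex.log (1 + u k) - u k)‖ ≤ 24*δ^2 := by
      refine (norm_sum_le _ _).trans ?_
      have hterm : ∀ k ∈ range (n+1),
          ‖Complex.log (1 + u k) - u k‖ ≤ δ^2 * (1/‖s1+(k:ℂ)‖)^2 := by
        intro k _
        have h3 : ‖u k‖ < 1 := by
          linarith [hulb k]
        refine (Complex.norm_log_one_add_sub_self_le h3).trans ?_
        have h4 : (1 - ‖u k‖)⁻¹ ≤ 2 := by
          rw [inv_le_comm₀ (by linarith [hulb k]) (by norm_num)]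
          linarith [hulb k]
        have h5 : ‖u k‖^2 * (1 - ‖u k‖)⁻¹ / 2 ≤ ‖u k‖^2 := by
          have h6 : (0:ℝ) ≤ ‖u k‖^2 := by positivity
          nlinarith
        refine h5.trans ?_
        rw [huabs k, mul_pow, one_div, _root_.sq_abs]
      refine (Finset.sum_le_sum hterm).trans ?_
      rw [← Finset.mul_sum]
      have h7 : ∑ k ∈ range (n+1), (1/‖s1+(k:ℂ)‖)^2 ≤ 24 := by
        rw [hs1]; exact sq_sum_bound σ τ hτ n
      have h8 := mul_le_mul_of_nonneg_left h7 (sq_nonneg δ)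
      linarith
    exact (add_le_add p1 p2).trans_eq hBdef.symm
  rw [hratio]
  have hE1 : ‖E‖ ≤ 1 := by
    exact hEbound.trans hB
  calc ‖Complex.exp E - 1‖ = ‖Complex.exp E - 1‖ := rfl
  _ ≤ 2 * ‖E‖ := Complex.norm_exp_sub_one_le hE1
  _ ≤ 2 * B := by linarith [hEbound]

theorem gamma_ratio_tendsto_one
    (σ : ℝ) (r ω r' r'' : ℕ → ℝ)
    (hr : Tendsto r atTop atTop)
    (hωpos : ∀ j, 0 < ω j)
    (hω : Tendsto (fun j => ω j * Real.log (r j)) atTop (𝓝 0))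
    (hr' : ∀ j, |r' j - r j| < ω j)
    (hr'' : ∀ j, |r'' j - r j| < ω j) :
    Tendsto (fun j =>
        Complex.Gamma ((σ : ℂ) + (r' j : ℂ) * Complex.I) /
          Complex.Gamma ((σ : ℂ) + (r'' j : ℂ) * Complex.I))
      atTop (𝓝 1) := by
  -- ω tends to 0
  have hω0 : Tendsto ω atTop (𝓝 0) := by
    have hlog : Tendsto (fun j => Real.log (r j)) atTop atTop :=
      Real.tendsto_log_atTop.comp hr
    have hev : ∀ᶠ j in atTop, ω j ≤ ω j * Real.log (r j) := by
      filter_upwards [hlog.eventually_ge_atTop 1] with j hj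
      nlinarith [hωpos j]
    exact squeeze_zero' (Eventually.of_forall fun j => (hωpos j).le) hev hω
  -- the bound sequence
  set c : ℕ → ℝ := fun j => 2*(ω j)*(18 + 8*Real.log (r j)) + 96*(ω j)^2 with hc
  have hctend : Tendsto c atTop (𝓝 0) := by
    have h1 : Tendsto (fun j => 36 * ω j) atTop (𝓝 0) := by
      simpa using hω0.const_mul (36:ℝ)
    have h2 : Tendsto (fun j => 16 * (ω j * Real.log (r j))) atTop (𝓝 0) := by
      simpa using hω.const_mul (16:ℝ)
    have h3 : Tendsto (fun j => 96 * (ω j * ω j)) atTop (𝓝 0) := by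
      simpa using (hω0.mul hω0).const_mul (96:ℝ)
    have : Tendsto (fun j => 36 * ω j + 16 * (ω j * Real.log (r j)) + 96 * (ω j * ω j))
        atTop (𝓝 0) := by simpa using (h1.add h2).add h3
    apply this.congr
    intro j; rw [hc]; ring
  have hcnonneg : ∀ j, 0 ≤ c j → True := fun _ _ => trivial
  rw [tendsto_iff_norm_sub_tendsto_zero]
  have h2c : Tendsto (fun j => 2 * c j) atTop (𝓝 0) := by simpa using hctend.const_mul (2:ℝ)
  apply squeeze_zero' (Eventually.of_forall fun j => norm_nonneg _) _ h2c
  -- eventual bound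
  have hev1 : ∀ᶠ j in atTop, r j ≥ 2*|σ| + 5 := hr.eventually_ge_atTop _
  have hev2 : ∀ᶠ j in atTop, ω j ≤ 1/2 := by
    have := hω0.eventually (eventually_le_nhds (by norm_num : (0:ℝ) < 1/2))
    exact this
  have hev3 : ∀ᶠ j in atTop, c j ≤ 1 :=
    hctend.eventually (eventually_le_nhds (by norm_num : (0:ℝ) < 1))
  have hev4 : ∀ᶠ j in atTop, Real.log (r j) ≥ 0 := by
    filter_upwards [hr.eventually_ge_atTop 1] with j hj
    exact Real.log_nonneg hj
  filter_upwards [hev1, hev2, hev3, hev4] with j hj1 hj2 hj3 hj4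
  -- setup
  set τ : ℝ := r' j with hτdef
  set τ' : ℝ := r'' j with hτ'def
  have hωj := hωpos j
  have habs' : |τ - r j| < ω j := hr' j
  have habs'' : |τ' - r j| < ω j := hr'' j
  have hb1 : r j - ω j ≤ τ := by
    have := abs_lt.mp habs'; linarith [this.1]
  have hb2 : τ ≤ r j + ω j := by
    have := abs_lt.mp habs'; linarith [this.2]
  have hb1' : r j - ω j ≤ τ' := by
    have := abs_lt.mp habs''; linarith [(abs_lt.mp habs'').1]
  have hb2' : τ' ≤ r j + ω j := by
    have := abs_lt.mp habs''; linarith [(abs_lt.mp habs'').2]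
  have hτge : 2*|σ| + 2 ≤ τ := by linarith
  have hτ'pos : 0 < τ' := by
    have : (0:ℝ) ≤ |σ| := abs_nonneg σ
    linarith
  have hδ1 : |τ - τ'| ≤ 2 * ω j := by
    have h := abs_sub_abs_le_abs_sub (τ - r j) (τ' - r j)
    calc |τ - τ'| = |(τ - r j) - (τ' - r j)| := by ring_nf
    _ ≤ |τ - r j| + |τ' - r j| := abs_sub _ _
    _ ≤ 2 * ω j := by linarith
  have hδle1 : |τ - τ'| ≤ 1 := by linarith
  -- B ≤ c j
  have hlogb : Real.log (τ + 1) ≤ Real.log (r j) + 1 := by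
    have h1 : τ + 1 ≤ 2 * r j := by
      have : (0:ℝ) ≤ |σ| := abs_nonneg σ
      linarith
    calc Real.log (τ + 1) ≤ Real.log (2 * r j) := by
          apply Real.log_le_log (by linarith) h1
    _ = Real.log 2 + Real.log (r j) := by
          rw [Real.log_mul (by norm_num) (by nlinarith [abs_nonneg σ])]
    _ ≤ Real.log (r j) + 1 := by
          have := Real.log_le_sub_one_of_pos (x := 2) (by norm_num)
          linarith
  have hBlec : |τ - τ'| * (10+8*Real.log (τ+1)) + 24*(τ-τ')^2 ≤ c j := by
    have e1 : |τ - τ'| * (10+8*Real.log (τ+1)) ≤ (2*ω j) * (18 + 8*Real.log (r j)) := by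
      apply mul_le_mul hδ1 (by linarith) (by nlinarith [Real.log_nonneg (show (1:ℝ) ≤ τ+1 by nlinarith [abs_nonneg σ])]) (by linarith)
    have e2 : 24*(τ-τ')^2 ≤ 96*(ω j)^2 := by
      have h3 : (τ - τ')^2 ≤ (2*ω j)^2 := by
        rw [← _root_.sq_abs (τ - τ')]
        apply pow_le_pow_left₀ (abs_nonneg _) hδ1
      nlinarith
    rw [hc]
    dsimp only
    linarith
  have hBle1 : |τ - τ'| * (10+8*Real.log (τ+1)) + 24*(τ-τ')^2 ≤ 1 := le_trans hBlec hj3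
  have := gamma_ratio_bound σ τ τ' hτge hτ'pos hδle1 hBle1
  calc ‖Complex.Gamma ((σ:ℂ) + ((r' j : ℝ):ℂ)*I) / Complex.Gamma ((σ:ℂ) + ((r'' j : ℝ):ℂ)*I) - 1‖
      ≤ 2*(|τ - τ'| * (10+8*Real.log (τ+1)) + 24*(τ-τ')^2) := this
  _ ≤ 2 * c j := by linarith
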